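/- Suppose A ≡_wtt B via wtt-operators with use bounded by a monotone computable function f satisfying f(x) > x, A ∩ B = ∅, only finitely many x satisfy (x, f(x)] ⊆ A ∪ B, and k is such that no x ≥ k has (x, f(x)] ⊆ A ∪ B. Define m₀ = k and m_{i+1} = f(m_i). Then for every C ≥_T A, the set Z defined by: Z agrees with A on (m_n, m_{n+1}] if n ∉ C, and Z agrees with the complement of B on (m_n, m_{n+1}] if n ∈ C, is a separator of A and B with Z ≡_T C. -/

import Mathlib

open Classical

/-- The characteristic function (into `ℕ`) of a set of naturals, as a partial function,
used as an oracle. -/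
noncomputable def chi (A : Set ℕ) : ℕ →. ℕ :=
  fun n => Part.some (if n ∈ A then 1 else 0)

/-- The characteristic function (into `Bool`) of a set of naturals. -/
noncomputable def chib (A : Set ℕ) : ℕ → Bool :=
  fun n => decide (n ∈ A)

/-- Codes for oracle Turing machines: partial recursive functions relative to an oracle. -/
inductive OCode : Type
  | zero | succ | left | right | oracle
  | pair : OCode → OCode → OCode
  | comp : OCode → OCode → OCode
  | prec : OCode → OCode → OCode
  | rfind' : OCode → OCode

/-- Evaluation of an oracle machine code relative to the oracle `g`. -/
def OCode.eval (g : ℕ →. ℕ) : OCode → ℕ →. ℕ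
  | .zero => pure 0
  | .succ => fun n => Part.some (n + 1)
  | .left => fun n => Part.some (Nat.unpair n).1
  | .right => fun n => Part.some (Nat.unpair n).2
  | .oracle => g
  | .pair cf cg => fun n => Nat.pair <$> OCode.eval g cf n <*> OCode.eval g cg n
  | .comp cf cg => fun n => OCode.eval g cg n >>= OCode.eval g cf
  | .prec cf cg =>
    Nat.unpaired fun a n =>
      n.rec (OCode.eval g cf a) fun y IH => do
        let i ← IH
        OCode.eval g cg (Nat.pair a (Nat.pair y i))
  | .rfind' cf =>
    Nat.unpaired fun a m =>
      (Nat.rfind fun n => (fun m => m = 0) <$> OCode.eval g cf (Nat.pair a (n + m))).map (· + m)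

/-- An enumeration of the oracle machine codes by natural numbers. -/
def OCode.ofNat : ℕ → OCode
  | 0 => .zero
  | 1 => .succ
  | 2 => .left
  | 3 => .right
  | 4 => .oracle
  | n + 5 =>
    let m := n.div2.div2
    have hm : m < n + 5 := by
      simp only [m, Nat.div2_val]
      exact
        lt_of_le_of_lt (le_trans (Nat.div_le_self _ _) (Nat.div_le_self _ _))
          (Nat.lt_succ_of_le (Nat.le_add_right _ _))
    have _m1 : m.unpair.1 < n + 5 := lt_of_le_of_lt m.unpair_left_le hm
    have _m2 : m.unpair.2 < n + 5 := lt_of_le_of_lt m.unpair_right_le hm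
    match n.bodd, n.div2.bodd with
    | false, false => .pair (OCode.ofNat m.unpair.1) (OCode.ofNat m.unpair.2)
    | false, true  => .comp (OCode.ofNat m.unpair.1) (OCode.ofNat m.unpair.2)
    | true , false => .prec (OCode.ofNat m.unpair.1) (OCode.ofNat m.unpair.2)
    | true , true  => .rfind' (OCode.ofNat m)
decreasing_by
  all_goals
    first
    | exact Nat.le_of_lt_succ _m1
    | exact Nat.le_of_lt_succ _m2
    | exact Nat.le_of_lt_succ hm
    | exact _m1
    | exact _m2
    | exact hm
    | (simp_wf; omega)

/-- `B` is Turing reducible to `A`: some oracle machine with oracle (the characteristic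
function of) `A` computes the characteristic function of `B`. -/
def SetTuringReducible (B A : Set ℕ) : Prop :=
  ∃ c : OCode, ∀ n, OCode.eval (chi A) c n = Part.some (if n ∈ B then 1 else 0)

/-- Turing equivalence of sets of naturals. -/
def TuringEquiv (A B : Set ℕ) : Prop :=
  SetTuringReducible A B ∧ SetTuringReducible B A

/-- A set of naturals is computably enumerable iff it is the domain of a partial
computable function. -/
def CE (A : Set ℕ) : Prop :=
  ∃ c : Nat.Partrec.Code, A = { n | (c.eval n).Dom }

/-- A set has c.e. (Turing) degree iff it is Turing equivalent to a c.e. set. -/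
def CEDegree (X : Set ℕ) : Prop :=
  ∃ W : Set ℕ, CE W ∧ TuringEquiv X W

/-- The halting problem `∅′`. -/
def HaltingSet : Set ℕ :=
  { e | ((Denumerable.ofNat Nat.Partrec.Code e).eval e).Dom }

/-- The `e`-th computably enumerable set `W_e`. -/
def WSet (e : ℕ) : Set ℕ :=
  { n | ((Denumerable.ofNat Nat.Partrec.Code e).eval n).Dom }

/-- `B` is weak truth table reducible to `A` with use bound `f`: a partial computable
functional, given `x` and the first `f x` bits of `A`, converges to `B(x)`. -/
def WttReducibleWith (f : ℕ → ℕ) (B A : Set ℕ) : Prop :=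
  ∃ F : ℕ → List Bool →. Bool, Partrec₂ F ∧
    ∀ x, F x ((List.range (f x)).map (chib A)) = Part.some (chib B x)

/-- Weak truth table reducibility: Turing reducibility with computably bounded use. -/
def WttReducible (B A : Set ℕ) : Prop :=
  ∃ f : ℕ → ℕ, Computable f ∧ WttReducibleWith f B A

/-- A `Π⁰₁` class: the set of infinite paths through a computable binary tree. -/
def Pi01Class (P : Set (Set ℕ)) : Prop :=
  ∃ T : List Bool → Bool, Computable T ∧
    ∀ Z : Set ℕ, Z ∈ P ↔ ∀ n, T ((List.range n).map (chib Z)) = true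

/-- A `Σ⁰₄` set of naturals: a four-quantifier form over a computable matrix. -/
def Sigma04 (S : Set ℕ) : Prop :=
  ∃ R : ℕ × ℕ × ℕ × ℕ × ℕ → Bool, Computable R ∧
    ∀ e, e ∈ S ↔ ∃ a, ∀ b, ∃ c, ∀ d, R (e, a, b, c, d) = true

theorem list_all_primrec {α} [Primcodable α] {f : α → List ℕ} {p : α → ℕ → Bool}
    (hf : Primrec f) (hp : Primrec₂ p) : Primrec fun a => (f a).all (p a) := by
  have h : Primrec₂ fun (a : α) (q : ℕ × Bool) => p a q.1 && q.2 :=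
    Primrec.and.comp (hp.comp Primrec.fst (Primrec.fst.comp Primrec.snd))
      (Primrec.snd.comp Primrec.snd)
  refine (Primrec.list_foldr hf (Primrec.const true) h).of_eq fun a => ?_
  induction (f a) with
  | nil => rfl
  | cons b l ih => simp [List.foldr_cons, ih]

theorem rfind_total {p : ℕ → Bool} (h : ∃ n, p n = true) :
    Nat.rfind (fun n => Part.some (p n)) = Part.some (Nat.find h) := by
  rw [Part.eq_some_iff]; apply (Nat.mem_rfind (p := fun n => Part.some (p n))).2
  refine ⟨?_, fun {j} hj => ?_⟩
  · simpa [Part.eq_some_iff] using Nat.find_spec h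
  · have := Nat.find_min h hj
    simpa [Part.eq_some_iff, Bool.not_eq_true] using Bool.of_not_eq_true this

theorem exists_stage (c : Nat.Partrec.Code) (l : List ℕ) (P : ℕ → Bool)
    (h : ∀ y ∈ l, P y = false → (c.eval y).Dom) :
    ∃ s, (l.all fun y => P y || (c.evaln s y).isSome) = true := by
  induction l with
  | nil => exact ⟨0, rfl⟩
  | cons b l ih =>
    obtain ⟨s1, hs1⟩ := ih fun y hy => h y (List.mem_cons_of_mem _ hy)
    by_cases hb : P b = true
    · refine ⟨s1, ?_⟩
      simp only [List.all_cons, hs1, hb, Bool.true_or, Bool.true_and]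
    · have hd : (c.eval b).Dom := h b List.mem_cons_self (by simpa using hb)
      obtain ⟨x, hx⟩ := Part.dom_iff_mem.1 hd
      obtain ⟨s2, hs2⟩ := Nat.Partrec.Code.evaln_complete.1 hx
      refine ⟨max s1 s2, ?_⟩
      simp only [List.all_cons, Bool.and_eq_true]
      constructor
      · have : x ∈ c.evaln (max s1 s2) b :=
          Nat.Partrec.Code.evaln_mono (le_max_right _ _) hs2
        simp [Option.isSome_iff_exists.2 ⟨x, this⟩]
      · rw [List.all_eq_true] at hs1 ⊢
        intro y hy
        have hs1y := hs1 y hy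
        rcases (by rw [Bool.or_eq_true] at hs1y; exact hs1y : P y = true ∨ (c.evaln s1 y).isSome = true) with h' | h'
        · simp [h']
        · obtain ⟨x', hx'⟩ := Option.isSome_iff_exists.1 h'
          have : x' ∈ c.evaln (max s1 s2) y :=
            Nat.Partrec.Code.evaln_mono (le_max_left _ _) hx'
          simp [Option.isSome_iff_exists.2 ⟨x', this⟩]


theorem bits_getD {S : Set ℕ} {NN y : ℕ} (h : y < NN) :
    ((List.range NN).map (chib S)).getD y false = chib S y := by
  rw [List.getD_eq_getElem?_getD]
  simp [List.getElem?_map, List.getElem?_range h]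

namespace OCode

def ofCode : Nat.Partrec.Code → OCode
  | .zero => .zero
  | .succ => .succ
  | .left => .left
  | .right => .right
  | .pair cf cg => .pair (ofCode cf) (ofCode cg)
  | .comp cf cg => .comp (ofCode cf) (ofCode cg)
  | .prec cf cg => .prec (ofCode cf) (ofCode cg)
  | .rfind' cf => .rfind' (ofCode cf)

theorem eval_ofCode (g : ℕ →. ℕ) : ∀ c : Nat.Partrec.Code, OCode.eval g (ofCode c) = c.eval
  | .zero => rfl
  | .succ => rfl
  | .left => rfl
  | .right => rfl
  | .pair cf cg => by simp [ofCode, OCode.eval, Nat.Partrec.Code.eval,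
      eval_ofCode g cf, eval_ofCode g cg]; rfl
  | .comp cf cg => by simp [ofCode, OCode.eval, Nat.Partrec.Code.eval,
      eval_ofCode g cf, eval_ofCode g cg]; rfl
  | .prec cf cg => by simp [ofCode, OCode.eval, Nat.Partrec.Code.eval,
      eval_ofCode g cf, eval_ofCode g cg]; rfl
  | .rfind' cf => by simp [ofCode, OCode.eval, Nat.Partrec.Code.eval, eval_ofCode g cf]; rfl

end OCode

def OComp (g φ : ℕ →. ℕ) : Prop := ∃ c : OCode, OCode.eval g c = φ

namespace OComp

theorem of_partrec {g φ : ℕ →. ℕ} (h : Nat.Partrec φ) : OComp g φ :=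
  let ⟨c, hc⟩ := Nat.Partrec.Code.exists_code.1 h
  ⟨OCode.ofCode c, by rw [OCode.eval_ofCode, hc]⟩

theorem oracle (g : ℕ →. ℕ) : OComp g g := ⟨.oracle, rfl⟩

theorem of_eq {g φ ψ : ℕ →. ℕ} (h : OComp g φ) (H : ∀ n, φ n = ψ n) : OComp g ψ :=
  (funext H : φ = ψ) ▸ h

theorem comp {g φ ψ : ℕ →. ℕ} (hφ : OComp g φ) (hψ : OComp g ψ) :
    OComp g fun n => ψ n >>= φ := by
  obtain ⟨cf, rfl⟩ := hφ; obtain ⟨cg, rfl⟩ := hψ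
  exact ⟨.comp cf cg, rfl⟩

theorem pair {g φ ψ : ℕ →. ℕ} (hφ : OComp g φ) (hψ : OComp g ψ) :
    OComp g fun n => Nat.pair <$> φ n <*> ψ n := by
  obtain ⟨cf, rfl⟩ := hφ; obtain ⟨cg, rfl⟩ := hψ
  exact ⟨.pair cf cg, rfl⟩

theorem prec {g φ ψ : ℕ →. ℕ} (hφ : OComp g φ) (hψ : OComp g ψ) :
    OComp g (Nat.unpaired fun a n =>
      n.rec (φ a) fun y IH => do
        let i ← IH
        ψ (Nat.pair a (Nat.pair y i))) := by
  obtain ⟨cf, rfl⟩ := hφ; obtain ⟨cg, rfl⟩ := hψ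
  exact ⟨.prec cf cg, rfl⟩

theorem comp_computable {g φ : ℕ →. ℕ} {h : ℕ → ℕ} (hφ : OComp g φ) (hh : Computable h) :
    OComp g fun n => φ (h n) :=
  (comp hφ (of_partrec (Partrec.nat_iff.1 hh.partrec))).of_eq fun n => by exact Part.bind_some _ _

end OComp


noncomputable def lenc (S : Set ℕ) (x : ℕ) : ℕ := Encodable.encode ((List.range x).map (chib S))

def Gstep : ℕ → ℕ := fun u =>
  Encodable.encode ((((Encodable.decode (u.unpair.1.unpair.2.unpair.2)) : Option (List Bool)).getD [])
    ++ [decide (u.unpair.2 = 1)])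

theorem Gstep_prim : Primrec Gstep := by
  have h1 : Primrec fun u : ℕ => u.unpair.1.unpair.2.unpair.2 :=
    (Primrec.snd.comp Primrec.unpair).comp <|
      (Primrec.snd.comp Primrec.unpair).comp (Primrec.fst.comp Primrec.unpair)
  have h2 : Primrec fun u : ℕ => (((Encodable.decode (u.unpair.1.unpair.2.unpair.2)) : Option (List Bool)).getD []) :=
    Primrec.option_getD.comp (Primrec.decode.comp h1) (Primrec.const [])
  have h3 : Primrec fun u : ℕ => [decide (u.unpair.2 = 1)] :=
    Primrec.list_cons.comp (Primrec.eq.comp (Primrec.snd.comp Primrec.unpair) (Primrec.const 1)).decide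
      (Primrec.const [])
  exact Primrec.encode.comp (Primrec.list_append.comp h2 h3)

theorem lenc_zero (S : Set ℕ) : lenc S 0 = Encodable.encode ([] : List Bool) := by simp [lenc]
theorem lenc_succ (S : Set ℕ) (x : ℕ) :
    lenc S (x + 1) = Encodable.encode (((List.range x).map (chib S)) ++ [chib S x]) := by
  simp [lenc, List.range_succ]

theorem OComp.listBits {g χ : ℕ →. ℕ} {S : Set ℕ}
    (hχ : OComp g χ) (hval : ∀ y, χ y = Part.some (if y ∈ S then 1 else 0)) :
    OComp g fun t => Part.some (lenc S t.unpair.2) := by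
  have hproj : Computable fun t : ℕ => t.unpair.2.unpair.1 :=
    ((Primrec.fst.comp Primrec.unpair).comp
      ((Primrec.snd.comp Primrec.unpair))).to_comp
  have hstep : OComp g fun t =>
      (Nat.pair <$> Part.some t <*> χ (t.unpair.2.unpair.1)) >>= fun u => Part.some (Gstep u) :=
    OComp.comp (OComp.of_partrec (Partrec.nat_iff.1 (Gstep_prim.to_comp.partrec)))
      (OComp.pair (OComp.of_partrec (Partrec.nat_iff.1 Computable.id.partrec))
        (hχ.comp_computable hproj))
  have hstepval : ∀ y i a : ℕ,
      ((Nat.pair <$> Part.some (Nat.pair a (Nat.pair y i)) <*>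
          χ ((Nat.pair a (Nat.pair y i)).unpair.2.unpair.1)) >>= fun u => Part.some (Gstep u))
        = Part.some (Gstep (Nat.pair (Nat.pair a (Nat.pair y i)) (if y ∈ S then 1 else 0))) := by
    intro y i a
    simp [hval, Seq.seq]
  have hΦ := OComp.prec (g := g)
    (OComp.of_partrec (Partrec.nat_iff.1 ((Computable.const (Encodable.encode ([] : List Bool))).partrec)))
    hstep
  refine hΦ.of_eq fun t => ?_
  show Nat.unpaired _ t = _
  rw [Nat.unpaired]
  generalize t.unpair.1 = a, t.unpair.2 = x
  induction x with
  | zero => simp [lenc]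
  | succ y ih =>
      show (Nat.rec _ _ y : Part ℕ).bind _ = _
      rw [ih]
      rw [Part.bind_some]
      rw [hstepval]
      rw [lenc_succ]
      simp [Gstep, chib]
      congr 1
      by_cases hy : y ∈ S <;> simp [hy, lenc]

section helpers
variable {f : ℕ → ℕ} {k : ℕ} {m : ℕ → ℕ}

theorem m_computable (hf : Computable f) (hm0 : m 0 = k) (hms : ∀ i, m (i + 1) = f (m i)) :
    Computable m := by
  have h : Computable fun n : ℕ => Nat.rec (motive := fun _ => ℕ) k (fun _ IH => f IH) n :=
    Computable.nat_rec Computable.id (Computable.const k)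
      ((hf.comp (Computable.snd.comp Computable.snd)).to₂)
  exact h.of_eq fun n => by
    induction n with
    | zero => exact hm0.symm
    | succ i ih =>
        show f (Nat.rec (motive := fun _ => ℕ) k (fun _ IH => f IH) i) = m (i + 1)
        rw [ih, hms]

theorem m_lt (hgt : ∀ x, x < f x) (hms : ∀ i, m (i + 1) = f (m i)) : ∀ i, m i < m (i + 1) :=
  fun i => (hms i) ▸ hgt (m i)

theorem m_ge (hgt : ∀ x, x < f x) (hm0 : m 0 = k) (hms : ∀ i, m (i + 1) = f (m i)) :
    ∀ i, i + k ≤ m i := by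
  intro i
  induction i with
  | zero => simp [hm0]
  | succ j ih => have := m_lt hgt hms j; omega

theorem m_exists (hgt : ∀ x, x < f x) (hm0 : m 0 = k) (hms : ∀ i, m (i + 1) = f (m i)) :
    ∀ x : ℕ, ∃ n, decide (x ≤ m (n + 1)) = true := by
  intro x
  refine ⟨x, ?_⟩
  have := m_ge hgt hm0 hms (x + 1)
  simpa using by omega

end helpers

theorem redZC (A B : Set ℕ) (f : ℕ → ℕ) (hf : Computable f) (hgt : ∀ x, x < f x)
    (hBA : WttReducibleWith f B A) (k : ℕ) (m : ℕ → ℕ)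
    (hm0 : m 0 = k) (hms : ∀ i, m (i + 1) = f (m i))
    (C : Set ℕ) (hC : SetTuringReducible A C) (Z : Set ℕ)
    (hZlow : ∀ x, x ≤ k → (x ∈ Z ↔ x ∈ A))
    (hZ : ∀ n, ∀ x ∈ Set.Ioc (m n) (m (n + 1)),
      (x ∈ Z ↔ if n ∈ C then x ∉ B else x ∈ A)) :
    SetTuringReducible Z C := by
  obtain ⟨F, hFpr, hFval⟩ := hBA
  obtain ⟨cC, hcC⟩ := hC
  have hm_comp : Computable m := m_computable hf hm0 hms
  have hex := m_exists hgt hm0 hms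
  obtain ⟨N, hN⟩ : ∃ N : ℕ → ℕ, ∀ x, N x = Nat.find (hex x) := ⟨_, fun _ => rfl⟩
  have hNspec : ∀ x, x ≤ m (N x + 1) := fun x => by
    rw [hN]; simpa using Nat.find_spec (hex x)
  have hNlow : ∀ x, k < x → m (N x) < x := by
    intro x hx
    rcases Nat.eq_zero_or_pos (N x) with h0 | hpos
    · rw [h0, hm0]; exact hx
    · have := Nat.find_min (hex x) (show N x - 1 < Nat.find (hex x) by rw [← hN]; omega)
      simp only [decide_eq_true_eq] at this
      have h1 : N x - 1 + 1 = N x := by omega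
      rw [h1] at this; omega
  -- the oracle-computable pieces
  have hAbits : OComp (chi C) fun t => Part.some (lenc A t.unpair.2) :=
    OComp.listBits ⟨cC, rfl⟩ hcC
  have hfx : Computable fun x : ℕ => Nat.pair 0 (f x) :=
    (Primrec₂.natPair.to_comp).comp (Computable.const 0) hf
  have u2 : OComp (chi C) fun x => Part.some (lenc A (Nat.pair 0 (f x)).unpair.2) :=
    hAbits.comp_computable hfx
  have hpc : Computable₂ fun (x n : ℕ) => decide (x ≤ m (n + 1)) :=
    Primrec.nat_le.decide.to_comp.comp Computable.fst
      (hm_comp.comp (Computable.succ.comp Computable.snd))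
  have hν : Partrec fun x : ℕ => Nat.rfind fun n => Part.some (decide (x ≤ m (n + 1))) := by
    apply Partrec.rfind
    exact hpc.partrec₂
  have u3 : OComp (chi C) fun x =>
      (Nat.rfind fun n => Part.some (decide (x ≤ m (n + 1)))) >>= chi C :=
    OComp.comp (OComp.oracle (chi C)) (OComp.of_partrec (Partrec.nat_iff.1 hν))
  have pack : OComp (chi C) fun x =>
      Nat.pair <$> Part.some x <*>
        (Nat.pair <$> Part.some (lenc A (Nat.pair 0 (f x)).unpair.2) <*>
          ((Nat.rfind fun n => Part.some (decide (x ≤ m (n + 1)))) >>= chi C)) :=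
    OComp.pair (OComp.of_partrec (Partrec.nat_iff.1 Computable.id.partrec)) (OComp.pair u2 u3)
  -- the tail partial computable function
  set Hfun : ℕ →. ℕ := fun u =>
    bif decide (k < u.unpair.1) && decide (u.unpair.2.unpair.2 = 1) then
      (F u.unpair.1 (((Encodable.decode u.unpair.2.unpair.1 : Option (List Bool))).getD [])).map
        (fun b => bif b then (0 : ℕ) else 1)
    else
      Part.some (bif (((Encodable.decode u.unpair.2.unpair.1 : Option (List Bool))).getD []).getD
        u.unpair.1 false then (1 : ℕ) else 0) with hHdef
  have hL : Computable fun u : ℕ =>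
      (((Encodable.decode u.unpair.2.unpair.1 : Option (List Bool))).getD []) := by
    have : Primrec fun u : ℕ => u.unpair.2.unpair.1 :=
      (Primrec.fst.comp Primrec.unpair).comp (Primrec.snd.comp Primrec.unpair)
    exact (Primrec.option_getD.comp (Primrec.decode.comp this) (Primrec.const [])).to_comp
  have hx1 : Computable fun u : ℕ => u.unpair.1 := (Primrec.fst.comp Primrec.unpair).to_comp
  have hH : Partrec Hfun := by
    apply Partrec.cond
    · have h1 : Primrec fun u : ℕ => decide (k < u.unpair.1) :=
        Primrec.nat_lt.comp (Primrec.const k) (Primrec.fst.comp Primrec.unpair) |>.decide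
      have h2 : Primrec fun u : ℕ => decide (u.unpair.2.unpair.2 = 1) :=
        Primrec.eq.comp ((Primrec.snd.comp Primrec.unpair).comp
          (Primrec.snd.comp Primrec.unpair)) (Primrec.const 1) |>.decide
      exact (Primrec.and.comp h1 h2).to_comp
    · exact (hFpr.comp hx1 hL).map
        ((Primrec.cond Primrec.snd (Primrec.const 0) (Primrec.const 1)).to_comp.to₂)
    · apply Computable.partrec
      have hbit : Primrec fun u : ℕ =>
          (((Encodable.decode u.unpair.2.unpair.1 : Option (List Bool))).getD []).getD
            u.unpair.1 false := by
        have hLp : Primrec fun u : ℕ =>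
            (((Encodable.decode u.unpair.2.unpair.1 : Option (List Bool))).getD []) :=
          Primrec.option_getD.comp
            (Primrec.decode.comp ((Primrec.fst.comp Primrec.unpair).comp
              (Primrec.snd.comp Primrec.unpair))) (Primrec.const [])
        exact (Primrec.list_getD false).comp hLp (Primrec.fst.comp Primrec.unpair)
      exact (Primrec.cond hbit (Primrec.const 1) (Primrec.const 0)).to_comp
  have final : OComp (chi C) fun x =>
      (Nat.pair <$> Part.some x <*>
        (Nat.pair <$> Part.some (lenc A (Nat.pair 0 (f x)).unpair.2) <*>
          ((Nat.rfind fun n => Part.some (decide (x ≤ m (n + 1)))) >>= chi C))) >>= Hfun :=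
    OComp.comp (OComp.of_partrec (Partrec.nat_iff.1 hH)) pack
  obtain ⟨c, hc⟩ := final
  refine ⟨c, fun x => ?_⟩
  rw [hc]
  have hrf : (Nat.rfind fun n => Part.some (decide (x ≤ m (n + 1)))) = Part.some (N x) := by
    rw [hN]; exact rfind_total (hex x)
  have hchiC : chi C (N x) = Part.some (if N x ∈ C then 1 else 0) := rfl
  have hbit : ((List.range (f x)).map (chib A)).getD x false = chib A x :=
    bits_getD (hgt x)
  simp only [hrf, Seq.seq, Part.map_eq_map, Part.bind_eq_bind, Part.bind_some,
    Part.map_some, hchiC, Nat.unpair_pair, lenc, Encodable.encodek, Option.getD_some, hHdef,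
    show (Part.some (N x) >>= chi C) = Part.some (if N x ∈ C then 1 else 0) from Part.bind_some _ _]
  by_cases hxk : k < x
  · have hIoc : x ∈ Set.Ioc (m (N x)) (m (N x + 1)) := ⟨hNlow x hxk, hNspec x⟩
    have hZx := hZ (N x) x hIoc
    by_cases hNC : N x ∈ C
    · rw [if_pos hNC] at hZx
      rw [if_pos hNC]
      have hcond : (decide (k < x) && decide ((1:ℕ) = 1)) = true := by simp [hxk]
      rw [hcond, cond_true, hFval x, Part.map_some]
      by_cases hxB : x ∈ B
      · have : x ∉ Z := fun h => (hZx.mp h) hxB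
        simp [chib, hxB, this]
      · have hxZ : x ∈ Z := hZx.mpr hxB
        simp [chib, hxB, hxZ]
    · rw [if_neg hNC] at hZx
      rw [if_neg hNC]
      have hcond : (decide (k < x) && decide ((0:ℕ) = 1)) = false := by simp
      rw [hcond, cond_false, hbit]
      by_cases hxA : x ∈ A
      · simp [chib, hxA, hZx.mpr hxA]
      · have : x ∉ Z := fun h => hxA (hZx.mp h)
        simp [chib, hxA, this]
  · have hcond : ∀ b : Bool, (decide (k < x) && b) = false := by
      intro b; simp [hxk]
    rw [hcond, cond_false, hbit]
    have hZx := hZlow x (by omega)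
    by_cases hxA : x ∈ A
    · simp [chib, hxA, hZx.mpr hxA]
    · have : x ∉ Z := fun h => hxA (hZx.mp h)
      simp [chib, hxA, this]

def Lof (ℓ : ℕ) : List Bool := ((Encodable.decode ℓ : Option (List Bool))).getD []

def Ilist (a : ℕ) : List ℕ :=
  (List.range (a.unpair.2.unpair.2 - a.unpair.2.unpair.1)).map fun j => a.unpair.2.unpair.1 + 1 + j

def Ob (cB : Nat.Partrec.Code) (u s : ℕ) : Bool :=
  (Ilist u.unpair.1).all fun y => (Lof u.unpair.2).getD y false || (cB.evaln s y).isSome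

def Pb (cA : Nat.Partrec.Code) (u s : ℕ) : Bool :=
  (Ilist u.unpair.1).all fun y => !((Lof u.unpair.2).getD y false) || (cA.evaln s y).isSome

theorem Lof_prim : Primrec Lof :=
  Primrec.option_getD.comp Primrec.decode (Primrec.const [])

theorem Ilist_prim : Primrec Ilist := by
  have h21 : Primrec fun a : ℕ => a.unpair.2.unpair.1 :=
    (Primrec.fst.comp Primrec.unpair).comp (Primrec.snd.comp Primrec.unpair)
  have h22 : Primrec fun a : ℕ => a.unpair.2.unpair.2 :=
    (Primrec.snd.comp Primrec.unpair).comp (Primrec.snd.comp Primrec.unpair)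
  exact Primrec.list_map (Primrec.list_range.comp (Primrec.nat_sub.comp h22 h21))
    ((Primrec.nat_add.comp (Primrec.nat_add.comp (h21.comp Primrec.fst) (Primrec.const 1))
      Primrec.snd).to₂)

theorem evaln_fixed_prim (c : Nat.Partrec.Code) :
    Primrec fun q : (ℕ × ℕ) × ℕ => ((c.evaln q.1.2 q.2).isSome) := by
  have := Nat.Partrec.Code.primrec_evaln
  exact Primrec.option_isSome.comp (this.comp
    (((Primrec.snd.comp Primrec.fst).pair (Primrec.const c)).pair Primrec.snd))

theorem Ob_prim (cB : Nat.Partrec.Code) : Primrec₂ (Ob cB) := by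
  have hf : Primrec fun p : ℕ × ℕ => Ilist p.1.unpair.1 :=
    Ilist_prim.comp ((Primrec.fst.comp Primrec.unpair).comp Primrec.fst)
  have hbit : Primrec fun q : (ℕ × ℕ) × ℕ => (Lof q.1.1.unpair.2).getD q.2 false :=
    (Primrec.list_getD false).comp
      (Lof_prim.comp ((Primrec.snd.comp Primrec.unpair).comp (Primrec.fst.comp Primrec.fst)))
      Primrec.snd
  exact list_all_primrec hf ((Primrec.or.comp hbit (evaln_fixed_prim cB)).to₂)

theorem Pb_prim (cA : Nat.Partrec.Code) : Primrec₂ (Pb cA) := by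
  have hf : Primrec fun p : ℕ × ℕ => Ilist p.1.unpair.1 :=
    Ilist_prim.comp ((Primrec.fst.comp Primrec.unpair).comp Primrec.fst)
  have hbit : Primrec fun q : (ℕ × ℕ) × ℕ => !((Lof q.1.1.unpair.2).getD q.2 false) :=
    Primrec.not.comp ((Primrec.list_getD false).comp
      (Lof_prim.comp ((Primrec.snd.comp Primrec.unpair).comp (Primrec.fst.comp Primrec.fst)))
      Primrec.snd)
  exact list_all_primrec hf ((Primrec.or.comp hbit (evaln_fixed_prim cA)).to₂)

theorem redCZ (A B : Set ℕ) (hA : CE A) (hB : CE B)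
    (f : ℕ → ℕ) (hf : Computable f) (hgt : ∀ x, x < f x)
    (k : ℕ) (hk : ∀ x, k ≤ x → ¬ Set.Ioc x (f x) ⊆ A ∪ B)
    (m : ℕ → ℕ) (hm0 : m 0 = k) (hms : ∀ i, m (i + 1) = f (m i))
    (C : Set ℕ) (Z : Set ℕ)
    (hZ : ∀ n, ∀ x ∈ Set.Ioc (m n) (m (n + 1)),
      (x ∈ Z ↔ if n ∈ C then x ∉ B else x ∈ A)) :
    SetTuringReducible C Z := by
  obtain ⟨cA, hcA⟩ := hA
  obtain ⟨cB, hcB⟩ := hB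
  have hm_comp : Computable m := m_computable hf hm0 hms
  have hmk : ∀ i, k ≤ m i := fun i => by have := m_ge hgt hm0 hms i; omega
  have hZbits : OComp (chi Z) fun t => Part.some (lenc Z t.unpair.2) :=
    OComp.listBits (OComp.oracle (chi Z)) (fun y => rfl)
  have hpc : Computable fun n : ℕ => Nat.pair n (Nat.pair (m n) (m (n + 1))) :=
    Primrec₂.natPair.to_comp.comp Computable.id
      (Primrec₂.natPair.to_comp.comp hm_comp (hm_comp.comp Computable.succ))
  have u1 : OComp (chi Z) fun n => Part.some (Nat.pair n (Nat.pair (m n) (m (n + 1)))) :=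
    OComp.of_partrec (Partrec.nat_iff.1 hpc.partrec)
  have hms1 : Computable fun n : ℕ => Nat.pair 0 (m (n + 1) + 1) :=
    Primrec₂.natPair.to_comp.comp (Computable.const 0)
      (Computable.succ.comp (hm_comp.comp Computable.succ))
  have u2 : OComp (chi Z) fun n => Part.some (lenc Z (Nat.pair 0 (m (n + 1) + 1)).unpair.2) :=
    hZbits.comp_computable hms1
  have pack : OComp (chi Z) fun n =>
      Nat.pair <$> Part.some (Nat.pair n (Nat.pair (m n) (m (n + 1)))) <*>
        Part.some (lenc Z (Nat.pair 0 (m (n + 1) + 1)).unpair.2) :=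
    OComp.pair u1 u2
  have hK : Partrec fun u : ℕ =>
      (Nat.rfind fun s => Part.some (Pb cA u s || Ob cB u s)).map
        fun s => bif Ob cB u s then (1 : ℕ) else 0 := by
    apply Partrec.map
    · apply Partrec.rfind
      exact ((Primrec.or.comp (Pb_prim cA) (Ob_prim cB)).to₂.to_comp).partrec₂
    · exact ((Primrec.cond (Ob_prim cB) (Primrec.const 1) (Primrec.const 0)).to_comp).to₂
  have final : OComp (chi Z) fun n =>
      (Nat.pair <$> Part.some (Nat.pair n (Nat.pair (m n) (m (n + 1)))) <*>
        Part.some (lenc Z (Nat.pair 0 (m (n + 1) + 1)).unpair.2)) >>=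
      fun u => (Nat.rfind fun s => Part.some (Pb cA u s || Ob cB u s)).map
        fun s => bif Ob cB u s then (1 : ℕ) else 0 :=
    OComp.comp (OComp.of_partrec (Partrec.nat_iff.1 hK)) pack
  obtain ⟨c, hc⟩ := final
  refine ⟨c, fun n => ?_⟩
  rw [hc]
  simp only [Seq.seq, Part.map_eq_map, Part.bind_eq_bind, Part.bind_some, Part.map_some,
    Nat.unpair_pair]
  set u : ℕ := Nat.pair (Nat.pair n (Nat.pair (m n) (m (n + 1)))) (lenc Z (m (n + 1) + 1))
    with hu
  have hLof : Lof u.unpair.2 = (List.range (m (n + 1) + 1)).map (chib Z) := by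
    simp [hu, Lof, lenc, Nat.unpair_pair, Encodable.encodek]
  have hmn : m n < m (n + 1) := m_lt hgt hms n
  have hImem : ∀ y, y ∈ Ilist u.unpair.1 ↔ (m n < y ∧ y ≤ m (n + 1)) := by
    intro y
    simp only [hu, Ilist, Nat.unpair_pair, List.mem_map, List.mem_range]
    constructor
    · rintro ⟨j, hj, rfl⟩; omega
    · intro hy; exact ⟨y - (m n + 1), by omega, by omega⟩
  have hbitI : ∀ y, y ≤ m (n + 1) → (Lof u.unpair.2).getD y false = chib Z y := by
    intro y hy
    rw [hLof]
    exact bits_getD (by omega)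
  -- the witness outside A ∪ B
  have hw := hk (m n) (hmk n)
  rw [← hms n] at hw
  obtain ⟨y0, hy0I, hy0AB⟩ := Set.not_subset.1 hw
  have hy0A : y0 ∉ A := fun h => hy0AB (Or.inl h)
  have hy0B : y0 ∉ B := fun h => hy0AB (Or.inr h)
  have hy0mem : y0 ∈ Ilist u.unpair.1 := (hImem y0).2 (Set.mem_Ioc.1 hy0I)
  have hZy := hZ n y0 hy0I
  have hAiff : ∀ y, y ∈ A ↔ (cA.eval y).Dom := fun y => by rw [hcA]; rfl
  have hBiff : ∀ y, y ∈ B ↔ (cB.eval y).Dom := fun y => by rw [hcB]; rfl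
  by_cases hnC : n ∈ C
  · rw [if_pos hnC] at hZy
    have hy0Z : y0 ∈ Z := hZy.mpr hy0B
    have hterm : ∃ s, Ob cB u s = true := by
      apply exists_stage cB (Ilist u.unpair.1) (fun y => (Lof u.unpair.2).getD y false)
      intro y hy hPy
      have hyI := (hImem y).1 hy
      have hbit := hbitI y hyI.2
      rw [hbit] at hPy
      have hyZ : y ∉ Z := by simpa [chib] using hPy
      have := hZ n y (Set.mem_Ioc.2 hyI)
      rw [if_pos hnC] at this
      have hyB : y ∈ B := by by_contra hyB; exact hyZ (this.mpr hyB)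
      exact (hBiff y).1 hyB
    have hterm' : ∃ s, (Pb cA u s || Ob cB u s) = true := by
      obtain ⟨s, hs⟩ := hterm; exact ⟨s, by simp [hs]⟩
    rw [rfind_total hterm', Part.map_some]
    have hs0 := Nat.find_spec hterm'
    have hPbf : Pb cA u (Nat.find hterm') = false := by
      rw [Pb, List.all_eq_false]
      refine ⟨y0, hy0mem, ?_⟩
      have hbit := hbitI y0 ((hImem y0).1 hy0mem).2
      rw [hbit]
      have hy0Zb : chib Z y0 = true := by simp [chib, hy0Z]
      rw [hy0Zb]
      simp only [Bool.not_true, Bool.false_or]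
      intro hsome
      obtain ⟨x, hx⟩ := Option.isSome_iff_exists.1 hsome
      exact hy0A ((hAiff y0).2 (Part.dom_iff_mem.2 ⟨x, Nat.Partrec.Code.evaln_sound hx⟩))
    rw [hPbf, Bool.false_or] at hs0
    rw [hs0]
    simp [if_pos hnC]
  · rw [if_neg hnC] at hZy
    have hy0Z : y0 ∉ Z := fun h => hy0A (hZy.mp h)
    have hterm : ∃ s, Pb cA u s = true := by
      apply exists_stage cA (Ilist u.unpair.1) (fun y => !((Lof u.unpair.2).getD y false))
      intro y hy hPy
      have hyI := (hImem y).1 hy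
      have hbit := hbitI y hyI.2
      rw [hbit] at hPy
      have hyZ : y ∈ Z := by
        have : chib Z y = true := by simpa using hPy
        simpa [chib] using this
      have := hZ n y (Set.mem_Ioc.2 hyI)
      rw [if_neg hnC] at this
      exact (hAiff y).1 (this.mp hyZ)
    have hterm' : ∃ s, (Pb cA u s || Ob cB u s) = true := by
      obtain ⟨s, hs⟩ := hterm; exact ⟨s, by simp [hs]⟩
    rw [rfind_total hterm', Part.map_some]
    have hObf : Ob cB u (Nat.find hterm') = false := by
      rw [Ob, List.all_eq_false]
      refine ⟨y0, hy0mem, ?_⟩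
      have hbit := hbitI y0 ((hImem y0).1 hy0mem).2
      rw [hbit]
      have hy0Zb : chib Z y0 = false := by simp [chib, hy0Z]
      rw [hy0Zb]
      simp only [Bool.false_or]
      intro hsome
      obtain ⟨x, hx⟩ := Option.isSome_iff_exists.1 hsome
      exact hy0B ((hBiff y0).2 (Part.dom_iff_mem.2 ⟨x, Nat.Partrec.Code.evaln_sound hx⟩))
    rw [hObf]
    simp [if_neg hnC]

/-- Case 1 of the wtt upward closure theorem: with use bound `f`, finitely
many `x` with `(x, f x] ⊆ A ∪ B`, `k` beyond all of them, `m₀ = k`, `m_{i+1} = f (m i)`,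
the set `Z` agreeing with `A` on `(m_n, m_{n+1}]` when `n ∉ C` and with `Bᶜ` when `n ∈ C`
is a separator Turing equivalent to `C`. -/
theorem stmt2 (A B : Set ℕ) (hA : CE A) (hB : CE B) (hdisj : A ∩ B = ∅)
    (f : ℕ → ℕ) (hf : Computable f) (hmono : Monotone f) (hgt : ∀ x, x < f x)
    (hBA : WttReducibleWith f B A) (hAB : WttReducibleWith f A B)
    (hfin : { x : ℕ | Set.Ioc x (f x) ⊆ A ∪ B }.Finite)
    (k : ℕ) (hk : ∀ x, k ≤ x → ¬ Set.Ioc x (f x) ⊆ A ∪ B)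
    (m : ℕ → ℕ) (hm0 : m 0 = k) (hms : ∀ i, m (i + 1) = f (m i))
    (C : Set ℕ) (hC : SetTuringReducible A C)
    (Z : Set ℕ)
    (hZlow : ∀ x, x ≤ k → (x ∈ Z ↔ x ∈ A))
    (hZ : ∀ n, ∀ x ∈ Set.Ioc (m n) (m (n + 1)),
      (x ∈ Z ↔ if n ∈ C then x ∉ B else x ∈ A)) :
    A ⊆ Z ∧ Z ∩ B = ∅ ∧ TuringEquiv Z C := by


  have hm_int : ∀ x, k < x → ∃ n, x ∈ Set.Ioc (m n) (m (n + 1)) := by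
    intro x hx
    have hex := m_exists hgt hm0 hms x
    refine ⟨Nat.find hex, ?_, by simpa using Nat.find_spec hex⟩
    rcases Nat.eq_zero_or_pos (Nat.find hex) with h0 | hpos
    · rw [h0, hm0]; exact hx
    · obtain ⟨j, hj⟩ := Nat.exists_eq_succ_of_ne_zero (by omega : Nat.find hex ≠ 0)
      have := Nat.find_min hex (by omega : j < Nat.find hex)
      simp only [decide_eq_true_eq] at this
      rw [hj, Nat.succ_eq_add_one]
      omega
  have hAB' : ∀ x, x ∈ A → x ∈ B → False := by
    intro x hxA hxB
    have : x ∈ (∅ : Set ℕ) := hdisj ▸ (⟨hxA, hxB⟩ : x ∈ A ∩ B)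
    exact this
  refine ⟨?_, ?_, ?_⟩
  · intro x hxA
    by_cases hxk : x ≤ k
    · exact (hZlow x hxk).mpr hxA
    · obtain ⟨n, hn⟩ := hm_int x (by omega)
      have hZx := hZ n x hn
      by_cases hnC : n ∈ C
      · rw [if_pos hnC] at hZx
        exact hZx.mpr fun hxB => hAB' x hxA hxB
      · rw [if_neg hnC] at hZx
        exact hZx.mpr hxA
  · apply Set.eq_empty_iff_forall_notMem.2
    rintro x ⟨hxZ, hxB⟩
    by_cases hxk : x ≤ k
    · exact hAB' x ((hZlow x hxk).mp hxZ) hxB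
    · obtain ⟨n, hn⟩ := hm_int x (by omega)
      have hZx := hZ n x hn
      by_cases hnC : n ∈ C
      · rw [if_pos hnC] at hZx
        exact (hZx.mp hxZ) hxB
      · rw [if_neg hnC] at hZx
        exact hAB' x (hZx.mp hxZ) hxB
  · exact ⟨redZC A B f hf hgt hBA k m hm0 hms C hC Z hZlow hZ,
      redCZ A B hA hB f hf hgt k hk m hm0 hms C Z hZ⟩
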